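/- (Darboux transformation of Riccati equations for the Bessel case) Let μ : ℝ → ℝ satisfy μ' = -2μ, let β : ℝ, and let f be a differentiable solution of f' + f² = β² + μ with f(t) + β ≠ 0 for all t. Define β̂ = β + 1 and f̂ = μ/(f + β) + β̂. Then f̂ is differentiable and satisfies f̂' + f̂² = β̂² + μ. -/
import Mathlib


/-- Darboux transformation of Riccati equations for the Bessel case. -/
theorem riccati_darboux_transform
    (μ f : ℝ → ℝ) (β : ℝ)
    (hμ : Differentiable ℝ μ) (hμeq : ∀ t, deriv μ t = -2 * μ t)
    (hf : Differentiable ℝ f)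
    (hfeq : ∀ t, deriv f t + (f t) ^ 2 = β ^ 2 + μ t)
    (hden : ∀ t, f t + β ≠ 0)
    (βh : ℝ) (hβh : βh = β + 1)
    (fh : ℝ → ℝ) (hfh : ∀ t, fh t = μ t / (f t + β) + βh) :
    Differentiable ℝ fh ∧ ∀ t, deriv fh t + (fh t) ^ 2 = βh ^ 2 + μ t := by
  have hfe : fh = fun t => μ t / (f t + β) + βh := funext hfh
  have hd : ∀ t, HasDerivAt fh
      ((deriv μ t * (f t + β) - μ t * deriv f t) / (f t + β) ^ 2) t := by
    intro t
    rw [hfe]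
    have h1 : HasDerivAt (fun t => f t + β) (deriv f t) t :=
      ((hf t).hasDerivAt.add_const β)
    have h2 : HasDerivAt (fun t => μ t / (f t + β))
        ((deriv μ t * (f t + β) - μ t * deriv f t) / (f t + β) ^ 2) t :=
      (hμ t).hasDerivAt.div h1 (hden t)
    simpa using h2.add_const βh
  constructor
  · intro t; exact (hd t).differentiableAt
  · intro t
    rw [(hd t).deriv, hfh t, hμeq t, hβh]
    have hft : deriv f t = β ^ 2 + μ t - (f t) ^ 2 := by linarith [hfeq t]
    rw [hft]
    have h0 : f t + β ≠ 0 := hden t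
    field_simp
    ring
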